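/- Let K be a field of characteristic p > 0, let d = 3 if p = 2 and d = 2 otherwise, and let q be a homogeneous form of degree d over K. If L is a purely inseparable extension of K and q has a nontrivial zero over L, then q has a nontrivial zero over K. -/

import Mathlib

open MvPolynomial Finsupp in
private lemma deg2_classify {n : ℕ} (β : Fin n →₀ ℕ) (h : β.degree = 2) :
    ∃ i j : Fin n, β = Finsupp.single i 1 + Finsupp.single j 1 := by
  have hcard : Multiset.card β.toMultiset = 2 := by
    rw [Finsupp.card_toMultiset]; exact h
  obtain ⟨x, y, hxy⟩ := Multiset.card_eq_two.1 hcard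
  refine ⟨x, y, ?_⟩
  have h2 : β.toMultiset = (Finsupp.single x 1 + Finsupp.single y 1).toMultiset := by
    rw [Finsupp.toMultiset_add, Finsupp.toMultiset_single, Finsupp.toMultiset_single, hxy]
    simp [Multiset.insert_eq_cons]
  have := congrArg Multiset.toFinsupp h2
  rwa [Finsupp.toMultiset_toFinsupp, Finsupp.toMultiset_toFinsupp] at this

open MvPolynomial in
private lemma quad_repr {n : ℕ} {K : Type*} [CommRing K] {q : MvPolynomial (Fin n) K}
    (hq : q.IsHomogeneous 2) :
    ∃ c : Fin n → Fin n → K, q = ∑ i, ∑ j, C (c i j) * (X i * X j) := by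
  have key : ∀ (α : Fin n →₀ ℕ) (r : K), α.degree = 2 →
      ∃ c : Fin n → Fin n → K,
        (monomial α r : MvPolynomial (Fin n) K) = ∑ i, ∑ j, C (c i j) * (X i * X j) := by
    intro α r hα
    obtain ⟨i₀, j₀, rfl⟩ := deg2_classify α hα
    refine ⟨fun i j => if i = i₀ ∧ j = j₀ then r else 0, ?_⟩
    have h2 : ∀ i : Fin n, (∑ j : Fin n, C (if i = i₀ ∧ j = j₀ then r else 0) * (X i * X j) : MvPolynomial (Fin n) K)
        = C (if i = i₀ then r else 0) * (X i * X j₀) := by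
      intro i
      rw [Finset.sum_eq_single j₀ (fun b _ hb => by simp [hb]) (by simp)]
      by_cases hi : i = i₀ <;> simp [hi]
    simp only [h2]
    rw [Finset.sum_eq_single i₀ (fun b _ hb => by simp [hb]) (by simp)]
    simp only [if_pos rfl]
    rw [C_apply, X, X, monomial_mul, monomial_mul]
    simp
  have hadd : ∀ f g : MvPolynomial (Fin n) K,
      (∃ c : Fin n → Fin n → K, f = ∑ i, ∑ j, C (c i j) * (X i * X j)) →
      (∃ c : Fin n → Fin n → K, g = ∑ i, ∑ j, C (c i j) * (X i * X j)) →
      ∃ c : Fin n → Fin n → K, f + g = ∑ i, ∑ j, C (c i j) * (X i * X j) := by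
    rintro f g ⟨c, rfl⟩ ⟨c', rfl⟩
    refine ⟨c + c', ?_⟩
    simp [add_mul, Finset.sum_add_distrib]
  have := Finset.sum_induction (fun α => monomial α (coeff α q))
    (fun f => ∃ c : Fin n → Fin n → K, f = ∑ i, ∑ j, C (c i j) * (X i * X j))
    hadd ⟨0, by simp⟩ (fun α hα => key α _ (by
      rw [Finsupp.degree_eq_weight_one]
      exact hq (mem_support_iff.1 hα)))
  rwa [support_sum_monomial_coeff q] at this

private lemma sum_comm₃ {M : Type*} [AddCommMonoid M] {ι : Type*} [Fintype ι]
    (g : ι → ι → ι → M) :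
    ∑ i, ∑ j, ∑ k, g i j k = ∑ k, ∑ i, ∑ j, g i j k := by
  calc ∑ i, ∑ j, ∑ k, g i j k = ∑ i, ∑ k, ∑ j, g i j k :=
        Finset.sum_congr rfl fun i _ => Finset.sum_comm
    _ = ∑ k, ∑ i, ∑ j, g i j k := Finset.sum_comm

private lemma sum_comm₄ {M : Type*} [AddCommMonoid M] {ι : Type*} [Fintype ι]
    (f : ι → ι → ι → ι → M) :
    ∑ i, ∑ j, ∑ k, ∑ l, f i j k l = ∑ k, ∑ l, ∑ i, ∑ j, f i j k l := by
  calc ∑ i, ∑ j, ∑ k, ∑ l, f i j k l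
      = ∑ k, ∑ i, ∑ j, ∑ l, f i j k l := sum_comm₃ _
    _ = ∑ k, ∑ l, ∑ i, ∑ j, f i j k l :=
        Finset.sum_congr rfl fun k _ => sum_comm₃ _

open Polynomial in
private lemma coeff_prod_natDeg_le {K : Type*} [CommRing K] {ι : Type*} (s : Finset ι)
    (f : ι → K[X]) (e : ι → ℕ) (h : ∀ i ∈ s, (f i).natDegree ≤ e i) :
    (∏ i ∈ s, f i).coeff (∑ i ∈ s, e i) = ∏ i ∈ s, (f i).coeff (e i) := by
  classical
  induction s using Finset.cons_induction with
  | empty => simp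
  | cons a s ha ih =>
    rw [Finset.prod_cons, Finset.sum_cons, Finset.prod_cons,
      Polynomial.coeff_mul_add_eq_of_natDegree_le (h a (Finset.mem_cons_self a s))
        ((Polynomial.natDegree_prod_le _ _).trans
          (Finset.sum_le_sum fun i hi => h i (Finset.mem_cons_of_mem hi))),
      ih (fun i hi => h i (Finset.mem_cons_of_mem hi))]

open MvPolynomial in
private lemma eval_smul_hom {K : Type*} [CommRing K] {n N : ℕ}
    {q : MvPolynomial (Fin n) K} (hq : q.IsHomogeneous N) (s : K) (x : Fin n → K) :
    eval (fun i => s * x i) q = s ^ N * eval x q := by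
  conv_lhs => rw [q.as_sum]
  conv_rhs => rw [q.as_sum]
  rw [map_sum, map_sum, Finset.mul_sum]
  refine Finset.sum_congr rfl fun α hα => ?_
  rw [eval_monomial, eval_monomial]
  have hdeg : ∑ i ∈ α.support, α i = N := by
    have := hq (mem_support_iff.1 hα)
    rwa [show (Finsupp.weight 1 : (Fin n →₀ ℕ) →+ ℕ) = Finsupp.weight (fun _ => 1) from rfl, ← Finsupp.degree_eq_weight_one] at this
  unfold Finsupp.prod
  rw [← hdeg]
  simp only [mul_pow]
  rw [Finset.prod_mul_distrib, Finset.prod_pow_eq_pow_sum]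
  ring

open MvPolynomial in
private lemma isHomogeneous_map {K S : Type*} [CommRing K] [CommRing S] (f : K →+* S)
    {n N : ℕ} {q : MvPolynomial (Fin n) K} (hq : q.IsHomogeneous N) :
    (q.map f).IsHomogeneous N := by
  intro α hα
  apply hq
  intro h0
  rw [coeff_map, h0, map_zero] at hα
  exact hα rfl

private lemma keyI {K S : Type*} [Field K] [CommRing S] [Algebra K S] {n : ℕ}
    (inv2 : Invertible (2 : K))
    (c bb : Fin n → Fin n → K) (a : Fin n → K)
    (horth : ∀ k l, k ≠ l → (∑ i, ∑ j, (⅟2 * (c i j + c j i)) * bb k i * bb l j : K) = 0)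
    (ha : ∀ k, a k = ∑ i, ∑ j, (⅟2 * (c i j + c j i)) * bb k i * bb k j)
    (u : Fin n → S) :
    ∑ i, ∑ j, algebraMap K S (c i j) *
      ((∑ k, u k * algebraMap K S (bb k i)) * (∑ k, u k * algebraMap K S (bb k j)))
    = ∑ k, algebraMap K S (a k) * u k ^ 2 := by
  set γ := algebraMap K S with hγ
  set f : Fin n → Fin n → K := fun k l => ∑ i, ∑ j, c i j * bb k i * bb l j with hf
  set T : S := ∑ k, ∑ l, (u k * u l) * γ (f k l) with hT
  have e1 : ∀ i j : Fin n, γ (c i j) *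
      ((∑ k, u k * γ (bb k i)) * (∑ k, u k * γ (bb k j)))
      = ∑ k, ∑ l, (u k * u l) * (γ (c i j) * γ (bb k i) * γ (bb l j)) := by
    intro i j
    rw [Finset.sum_mul_sum, Finset.mul_sum]
    refine Finset.sum_congr rfl fun k _ => ?_
    rw [Finset.mul_sum]
    refine Finset.sum_congr rfl fun l _ => ?_
    ring
  have step1 : (∑ i, ∑ j, γ (c i j) *
      ((∑ k, u k * γ (bb k i)) * (∑ k, u k * γ (bb k j)))) = T := by
    simp only [e1]
    rw [sum_comm₄, hT]
    refine Finset.sum_congr rfl fun k _ => Finset.sum_congr rfl fun l _ => ?_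
    rw [hf]
    simp only [map_sum, map_mul, Finset.mul_sum]
  rw [step1]
  have hswap : T = ∑ k, ∑ l, (u k * u l) * γ (f l k) := by
    rw [hT, Finset.sum_comm]
    refine Finset.sum_congr rfl fun k _ => Finset.sum_congr rfl fun l _ => by ring
  set Asym : Fin n → Fin n → K :=
    fun k l => ∑ i, ∑ j, (⅟2 * (c i j + c j i)) * bb k i * bb l j with hAsym
  have hAs : ∀ k l, Asym k l = ⅟2 * (f k l + f l k) := by
    intro k l
    have hflk : f l k = ∑ i, ∑ j, c j i * bb k i * bb l j := by
      rw [hf, Finset.sum_comm]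
      exact Finset.sum_congr rfl fun i _ => Finset.sum_congr rfl fun j _ => by ring
    rw [hflk]
    show (∑ i, ∑ j, (⅟2 * (c i j + c j i)) * bb k i * bb l j)
      = ⅟2 * ((∑ i, ∑ j, c i j * bb k i * bb l j) + ∑ i, ∑ j, c j i * bb k i * bb l j)
    simp only [← Finset.sum_add_distrib, Finset.mul_sum]
    exact Finset.sum_congr rfl fun i _ => Finset.sum_congr rfl fun j _ => by ring
  have hTT : T + T = ∑ k, ∑ l, ((u k * u l) * γ (f k l) + (u k * u l) * γ (f l k)) := by
    nth_rewrite 2 [hswap]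
    rw [hT]
    simp only [← Finset.sum_add_distrib]
  have h2 : (γ (⅟2 : K) : S) * 2 = 1 := by
    rw [show (2 : S) = γ 2 from (map_ofNat γ 2).symm, ← map_mul, invOf_mul_self, map_one]
  have hT2 : T = ∑ k, ∑ l, (u k * u l) * γ (Asym k l) := by
    calc T = γ ⅟2 * (T + T) := by rw [← two_mul, ← mul_assoc, h2, one_mul]
      _ = γ ⅟2 * ∑ k, ∑ l, ((u k * u l) * γ (f k l) + (u k * u l) * γ (f l k)) := by
          rw [hTT]
      _ = ∑ k, ∑ l, (u k * u l) * γ (Asym k l) := by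
          simp only [Finset.mul_sum]
          refine Finset.sum_congr rfl fun k _ => Finset.sum_congr rfl fun l _ => ?_
          rw [hAs, map_mul, map_add]
          ring
  have hcol : ∀ k, (∑ l, (u k * u l) * γ (Asym k l)) = γ (a k) * u k ^ 2 := by
    intro k
    rw [Finset.sum_eq_single k (fun l _ hlk => by
      rw [show Asym k l = 0 from horth k l (fun h => hlk h.symm)]
      simp) (by simp)]
    rw [show a k = Asym k k from ha k, sq]
    ring
  rw [hT2]
  exact Finset.sum_congr rfl fun k _ => hcol k

open MvPolynomial Module in
private theorem odd_case {K L : Type*} [Field K] [Field L] [Algebra K L]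
    {p : ℕ} (hp : p.Prime) (hp2 : p ≠ 2) [CharP K p] [IsPurelyInseparable K L]
    {n : ℕ} {q : MvPolynomial (Fin n) K} (hq : q.IsHomogeneous 2)
    (v : Fin n → L) (hv0 : v ≠ 0) (hv : eval v (q.map (algebraMap K L)) = 0) :
    ∃ w : Fin n → K, w ≠ 0 ∧ eval w q = 0 := by
  classical
  haveI : Fact p.Prime := ⟨hp⟩
  have hinj : Function.Injective (algebraMap K L) := (algebraMap K L).injective
  have h2K : (2 : K) ≠ 0 := by
    have : ((2 : ℕ) : K) ≠ 0 := fun h0 => hp2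
      ((Nat.prime_dvd_prime_iff_eq hp Nat.prime_two).1 ((CharP.cast_eq_zero_iff K p 2).1 h0))
    exact_mod_cast this
  haveI inv2 : Invertible (2 : K) := invertibleOfNonzero h2K
  obtain ⟨c, hc⟩ := quad_repr hq
  set A : Fin n → Fin n → K := fun i j => ⅟2 * (c i j + c j i) with hA
  set Bf : (Fin n → K) →ₗ[K] (Fin n → K) →ₗ[K] K := LinearMap.mk₂ K
    (fun x y => ∑ i, ∑ j, A i j * x i * y j)
    (fun x x' y => by
      simp only [Pi.add_apply, mul_add, add_mul, Finset.sum_add_distrib])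
    (fun r x y => by
      simp only [Pi.smul_apply, smul_eq_mul, Finset.mul_sum]
      exact Finset.sum_congr rfl fun i _ => Finset.sum_congr rfl fun j _ => by ring)
    (fun x y y' => by
      simp only [Pi.add_apply, mul_add, add_mul, Finset.sum_add_distrib])
    (fun r x y => by
      simp only [Pi.smul_apply, smul_eq_mul, Finset.mul_sum]
      exact Finset.sum_congr rfl fun i _ => Finset.sum_congr rfl fun j _ => by ring)
    with hBf
  have hBfapply : ∀ x y : Fin n → K, Bf x y = ∑ i, ∑ j, A i j * x i * y j :=
    fun x y => rfl
  have hBsymm : Bf.IsSymm := by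
    refine ⟨fun x y => ?_⟩
    rw [RingHom.id_apply, hBfapply, hBfapply, Finset.sum_comm]
    refine Finset.sum_congr rfl fun i _ => Finset.sum_congr rfl fun j _ => ?_
    simp only [hA]
    ring
  obtain ⟨b0, hb0⟩ := LinearMap.BilinForm.exists_orthogonal_basis hBsymm
  set b : Basis (Fin n) K (Fin n → K) := b0.reindex (finCongr (Module.finrank_fin_fun K)) with hb
  have hborth : ∀ k l : Fin n, k ≠ l → Bf (b k) (b l) = 0 := by
    intro k l hkl
    rw [hb]
    rw [Basis.reindex_apply, Basis.reindex_apply]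
    exact hb0 (fun h => hkl (by
      have := congrArg (finCongr (Module.finrank_fin_fun K)) h
      simpa using this))
  set a : Fin n → K := fun k => Bf (b k) (b k) with ha
  have horth' : ∀ k l, k ≠ l →
      (∑ i, ∑ j, (⅟2 * (c i j + c j i)) * (b k) i * (b l) j : K) = 0 := by
    intro k l hkl
    have := hborth k l hkl
    rwa [hBfapply] at this
  have ha' : ∀ k, a k = ∑ i, ∑ j, (⅟2 * (c i j + c j i)) * (b k) i * (b k) j :=
    fun k => hBfapply (b k) (b k)
  set N : Matrix (Fin n) (Fin n) K := (Pi.basisFun K (Fin n)).toMatrix (⇑b) with hN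
  haveI : Invertible N := (Pi.basisFun K (Fin n)).invertibleToMatrix b
  have hNval : ∀ i k, N i k = b k i := by
    intro i k
    rw [hN, Basis.toMatrix_apply, Pi.basisFun_repr]
  -- shared final reconstruction
  have hfin : ∀ z : Fin n → K, z ≠ 0 → (∑ k, a k * z k ^ 2) = 0 →
      ∃ w : Fin n → K, w ≠ 0 ∧ eval w q = 0 := by
    intro z hz0 hzeq
    refine ⟨fun i => ∑ k, z k * b k i, ?_, ?_⟩
    · intro h
      have hNz : N.mulVec z = 0 := by
        funext i
        have := congrFun h i
        simp only [Pi.zero_apply] at this ⊢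
        rw [Matrix.mulVec, dotProduct]
        rw [← this]
        exact Finset.sum_congr rfl fun k _ => by rw [hNval]; ring
      have hz : z = 0 := by
        calc z = (⅟N * N).mulVec z := by rw [invOf_mul_self, Matrix.one_mulVec]
          _ = (⅟N).mulVec (N.mulVec z) := (Matrix.mulVec_mulVec z (⅟N) N).symm
          _ = 0 := by rw [hNz, Matrix.mulVec_zero]
      exact hz0 hz
    · rw [hc]
      simp only [map_sum, map_mul, eval_C, eval_X]
      have hk := keyI (S := K) inv2 c (fun k => b k) a horth' ha' z
      simp only [Algebra.algebraMap_self, RingHom.id_apply] at hk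
      rw [hk, hzeq]
  -- coordinates of v in the basis b, over L
  set γ := algebraMap K L with hγ
  set N' : Matrix (Fin n) (Fin n) L := N.map γ with hN'
  have hdetN : IsUnit N.det := Matrix.isUnit_iff_isUnit_det N |>.mp (isUnit_of_invertible N)
  have hdetN' : IsUnit N'.det := by
    rw [hN']
    have hdet2 : (N.map ⇑γ).det = γ N.det := by
      rw [← RingHom.mapMatrix_apply]
      exact (RingHom.map_det γ N).symm
    rw [hdet2]
    exact hdetN.map γ
  set u : Fin n → L := (N'⁻¹).mulVec v with hu
  have hNu : N'.mulVec u = v := by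
    rw [hu, Matrix.mulVec_mulVec, Matrix.mul_nonsing_inv _ hdetN', Matrix.one_mulVec]
  have hu0 : u ≠ 0 := fun h => hv0 (by rw [← hNu, h, Matrix.mulVec_zero])
  have hvrep : ∀ i, v i = ∑ k, u k * γ (b k i) := by
    intro i
    conv_lhs => rw [← hNu]
    rw [Matrix.mulVec, dotProduct]
    refine Finset.sum_congr rfl fun k _ => ?_
    rw [hN', Matrix.map_apply, hNval]
    ring
  rw [eval_map, ← aeval_def, hc] at hv
  simp only [map_sum, map_mul, aeval_C, aeval_X] at hv
  simp only [hvrep] at hv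
  rw [keyI inv2 c (fun k => (b k : Fin n → K)) a horth' ha' u] at hv
  -- Frobenius descent
  haveI : CharP L p := charP_of_injective_algebraMap hinj p
  choose m hm using fun k => IsPurelyInseparable.pow_mem K p (u k)
  set M := Finset.univ.sup m with hM
  have hMk : ∀ k, ∃ wk : K, γ wk = u k ^ p ^ M := by
    intro k
    obtain ⟨y, hy⟩ := hm k
    refine ⟨y ^ p ^ (M - m k), ?_⟩
    rw [map_pow, hy, ← pow_mul, ← pow_add,
      Nat.add_sub_cancel' (Finset.le_sup (Finset.mem_univ k))]
  choose w hw using hMk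
  have hfrob : (∑ k, a k ^ p ^ M * w k ^ 2) = 0 := by
    apply hinj
    rw [map_zero, map_sum]
    have hE : (∑ k, γ (a k) * u k ^ 2) ^ p ^ M = 0 := by
      rw [hv]
      exact zero_pow (pow_ne_zero M hp.ne_zero)
    rw [sum_pow_char_pow] at hE
    rw [← hE]
    refine Finset.sum_congr rfl fun k _ => ?_
    rw [map_mul, map_pow, map_pow, hw, mul_pow, ← pow_mul, ← pow_mul, mul_comm 2 (p ^ M)]
  have hw0 : w ≠ 0 := by
    obtain ⟨k, hk⟩ := Function.ne_iff.1 hu0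
    intro h
    apply hk
    have h0 : γ (w k) = 0 := by rw [congrFun h k]; simp
    rw [hw k] at h0
    simpa using pow_eq_zero_iff (pow_ne_zero M hp.ne_zero) |>.1 h0
  by_cases hak : ∃ k, a k = 0
  · obtain ⟨k₀, hk₀⟩ := hak
    refine hfin (Pi.single k₀ 1) (by
      intro h
      have := congrFun h k₀
      simp at this) ?_
    rw [Finset.sum_eq_single k₀ (fun l _ hl => by simp [Pi.single_eq_of_ne hl]) (by simp)]
    simp [hk₀]
  · push_neg at hak
    obtain ⟨r, hr⟩ : Odd (p ^ M) := (hp.odd_of_ne_two hp2).pow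
    refine hfin (fun k => a k ^ r * w k) ?_ ?_
    · obtain ⟨k, hk⟩ := Function.ne_iff.1 hw0
      exact Function.ne_iff.2 ⟨k, mul_ne_zero (pow_ne_zero r (hak k)) hk⟩
    · rw [← hfrob]
      refine Finset.sum_congr rfl fun k _ => ?_
      rw [hr]
      ring

private lemma mv_aeval_self {K : Type*} [CommSemiring K] {σ : Type*} (f : σ → K)
    (p : MvPolynomial σ K) : MvPolynomial.aeval f p = MvPolynomial.eval f p := by
  rw [MvPolynomial.aeval_def, Algebra.algebraMap_self]
  rfl


private lemma eval_map_comp {K L : Type*} [CommSemiring K] [CommSemiring L] (f : K →+* L)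
    {n : ℕ} (x : Fin n → K) (q : MvPolynomial (Fin n) K) :
    MvPolynomial.eval (fun i => f (x i)) (q.map f) = f (MvPolynomial.eval x q) := by
  rw [MvPolynomial.eval_map]
  have := MvPolynomial.eval₂_comp_left f (RingHom.id K) x q
  rw [RingHom.comp_id] at this
  exact this.symm

open MvPolynomial Polynomial in
private theorem cubic_step {K L : Type*} [Field K] [Field L] [Algebra K L] [CharP K 2]
    {n : ℕ} {q : MvPolynomial (Fin n) K} (hq : q.IsHomogeneous 3)
    (a : L) (ha : a ∉ Set.range (algebraMap K L)) (b : K)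
    (hab : a ^ 2 = algebraMap K L b)
    (c d : Fin n → K)
    (hv0 : (fun i => algebraMap K L (c i) + algebraMap K L (d i) * a) ≠ 0)
    (hv : MvPolynomial.eval (fun i => algebraMap K L (c i) + algebraMap K L (d i) * a)
      (q.map (algebraMap K L)) = 0) :
    ∃ w : Fin n → K, w ≠ 0 ∧ MvPolynomial.eval w q = 0 := by
  classical
  have hinj : Function.Injective (algebraMap K L) := (algebraMap K L).injective
  haveI : CharP L 2 := charP_of_injective_algebraMap hinj 2
  set γ := algebraMap K L with hγ
  set g : Fin n → K[X] := fun i => Polynomial.C (c i) + Polynomial.C (d i) * Polynomial.X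
    with hg
  set h : K[X] := MvPolynomial.aeval g q with hh
  have hgdeg : ∀ i, (g i).natDegree ≤ 1 := by
    intro i
    rw [hg]
    simp only []
    rw [add_comm]
    exact Polynomial.natDegree_linear_le
  have hgc1 : ∀ i, (g i).coeff 1 = d i := by
    intro i
    rw [hg]
    simp [Polynomial.coeff_C]
  have hsupdeg : ∀ α ∈ q.support, (∑ i ∈ α.support, α i) = 3 := by
    intro α hα
    have := hq (MvPolynomial.mem_support_iff.1 hα)
    rwa [show (Finsupp.weight 1 : (Fin n →₀ ℕ) →+ ℕ) = Finsupp.weight (fun _ => 1) from rfl, ← Finsupp.degree_eq_weight_one] at this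
  -- degree bound
  have hdeg : h.natDegree ≤ 3 := by
    rw [hh]
    conv_lhs => rw [q.as_sum]
    rw [map_sum]
    apply Polynomial.natDegree_sum_le_of_forall_le
    intro α hα
    rw [MvPolynomial.aeval_monomial]
    apply (Polynomial.natDegree_mul_le).trans
    have h1 : (algebraMap K K[X]) (MvPolynomial.coeff α q) = Polynomial.C _ := rfl
    rw [h1, Polynomial.natDegree_C, zero_add]
    apply (Polynomial.natDegree_prod_le _ _).trans
    calc ∑ i ∈ α.support, ((g i) ^ α i).natDegree
        ≤ ∑ i ∈ α.support, α i := Finset.sum_le_sum (fun i _ =>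
          (Polynomial.natDegree_pow_le).trans (by
            calc α i * (g i).natDegree ≤ α i * 1 :=
                  Nat.mul_le_mul_left _ (hgdeg i)
              _ = α i := Nat.mul_one _))
      _ = 3 := hsupdeg α hα
  -- coefficient 3
  have hcoeff3 : h.coeff 3 = MvPolynomial.eval d q := by
    rw [hh]
    conv_lhs => rw [q.as_sum]
    conv_rhs => rw [q.as_sum]
    rw [map_sum, map_sum, Polynomial.finset_sum_coeff]
    refine Finset.sum_congr rfl fun α hα => ?_
    rw [MvPolynomial.aeval_monomial, MvPolynomial.eval_monomial]
    have h1 : (algebraMap K K[X]) (MvPolynomial.coeff α q) = Polynomial.C _ := rfl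
    rw [h1, Polynomial.coeff_C_mul]
    congr 1
    unfold Finsupp.prod
    rw [← hsupdeg α hα,
      coeff_prod_natDeg_le _ _ _ (fun i _ => (Polynomial.natDegree_pow_le).trans (by
        calc α i * (g i).natDegree ≤ α i * 1 := Nat.mul_le_mul_left _ (hgdeg i)
          _ = α i := Nat.mul_one _))]
    refine Finset.prod_congr rfl fun i _ => ?_
    have := Polynomial.coeff_pow_of_natDegree_le (m := α i) (hgdeg i)
    rw [Nat.mul_one] at this
    rw [this, hgc1]
  -- h (a) = 0
  have haeval : Polynomial.aeval a h = 0 := by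
    rw [hh]
    have hca := MvPolynomial.comp_aeval_apply (R := K) (f := g) (φ := Polynomial.aeval a) q
    rw [hca]
    have hcomp : (fun i => Polynomial.aeval a (g i)) = fun i => γ (c i) + γ (d i) * a := by
      funext i
      rw [hg]
      simp [hγ]
    rw [hcomp]
    rw [MvPolynomial.aeval_def, ← MvPolynomial.eval_map]
    exact hv
  -- expansion of h at a
  have h4 : h.natDegree < 4 := lt_of_le_of_lt hdeg (by norm_num)
  have hexp : γ (h.coeff 0 + b * h.coeff 2) + γ (h.coeff 1 + b * h.coeff 3) * a = 0 := by
    have hsum := Polynomial.aeval_eq_sum_range' h4 a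
    rw [haeval] at hsum
    simp only [Finset.sum_range_succ, Finset.sum_range_zero, zero_add] at hsum
    have ha3 : a ^ 3 = γ b * a := by rw [pow_succ, hab]
    rw [pow_zero, pow_one, hab, ha3] at hsum
    simp only [Algebra.smul_def] at hsum
    rw [map_add, map_add, map_mul, map_mul]
    linear_combination -hsum
  have hlin : ∀ x y : K, γ x + γ y * a = 0 → x = 0 ∧ y = 0 := by
    intro x y hxy
    by_cases hy : y = 0
    · subst hy
      simp only [map_zero, zero_mul, add_zero] at hxy
      exact ⟨hinj (hxy.trans (map_zero γ).symm), rfl⟩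
    · exfalso
      apply ha
      refine ⟨x / y, ?_⟩
      have hyne : γ y ≠ 0 := fun h0 => hy (hinj (h0.trans (map_zero γ).symm))
      have hxa : γ x = γ y * a := by
        have h1 : γ x = -(γ y * a) := eq_neg_of_add_eq_zero_left hxy
        rwa [CharTwo.neg_eq] at h1
      rw [map_div₀, div_eq_iff hyne, hxa]
      ring
  obtain ⟨e0, e1⟩ := hlin _ _ hexp
  have htwoK : (2 : K) = 0 := CharTwo.two_eq_zero
  have heval : ∀ t : K, Polynomial.eval t h
      = MvPolynomial.eval (fun i => c i + d i * t) q := by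
    intro t
    have h1 : Polynomial.aeval t h
        = MvPolynomial.aeval (fun i => Polynomial.aeval t (g i)) q := by
      rw [hh]
      exact MvPolynomial.comp_aeval_apply (R := K) (f := g) (φ := Polynomial.aeval t) q
    have h2 : (fun i => Polynomial.aeval t (g i)) = fun i => c i + d i * t := by
      funext i
      rw [hg]
      simp
    calc Polynomial.eval t h = Polynomial.aeval t h :=
          (congrFun (Polynomial.coe_aeval_eq_eval t) h).symm
      _ = _ := by rw [h1, h2, mv_aeval_self]
  have hevalc : ∀ t : K, Polynomial.eval t h
      = h.coeff 0 + h.coeff 1 * t + h.coeff 2 * t ^ 2 + h.coeff 3 * t ^ 3 := by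
    intro t
    rw [Polynomial.eval_eq_sum_range' h4]
    simp only [Finset.sum_range_succ, Finset.sum_range_zero, zero_add]
    ring
  by_cases hqd : MvPolynomial.eval d q = 0
  · by_cases hd0 : d = 0
    · have hvc : (fun i => γ (c i) + γ (d i) * a) = fun i => γ (c i) := by
        funext i
        rw [hd0]
        simp
      rw [hvc] at hv0 hv
      have hc0 : c ≠ 0 := fun h0 => hv0 (by funext i; rw [h0]; simp)
      refine ⟨c, hc0, ?_⟩
      apply hinj
      rw [map_zero, ← hv, eval_map_comp γ c q]
    · exact ⟨d, hd0, hqd⟩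
  · set t := h.coeff 2 / h.coeff 3 with ht
    have h3ne : h.coeff 3 ≠ 0 := by rw [hcoeff3]; exact hqd
    have hth : h.coeff 2 = t * h.coeff 3 := by
      rw [ht]
      field_simp
    have hev0 : Polynomial.eval t h = 0 := by
      rw [hevalc]
      linear_combination e0 + t * e1 + (t ^ 2 - b) * hth
        + ((t ^ 2 - b) * t * h.coeff 3) * htwoK
    set w' : Fin n → K := fun i => c i + d i * t with hw'
    by_cases hw'0 : w' = 0
    · exfalso
      have hcd : ∀ i, c i = d i * t := by
        intro i
        have hci := congrFun hw'0 i
        simp only [hw', Pi.zero_apply] at hci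
        linear_combination hci - (d i * t) * htwoK
      have hvform : (fun i => γ (c i) + γ (d i) * a) = fun i => (a + γ t) * γ (d i) := by
        funext i
        rw [hcd i, map_mul]
        ring
      rw [hvform] at hv
      rw [eval_smul_hom (isHomogeneous_map γ hq) (a + γ t) (fun i => γ (d i))] at hv
      have hne : (a + γ t) ≠ 0 := by
        intro h0
        apply ha
        refine ⟨t, ?_⟩
        have h1 : a = -(γ t) := eq_neg_of_add_eq_zero_left h0
        rw [CharTwo.neg_eq] at h1
        exact h1.symm
      have hz : MvPolynomial.eval (fun i => γ (d i)) (MvPolynomial.map γ q) = 0 := by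
        rcases mul_eq_zero.1 hv with h1 | h2
        · exact absurd h1 (pow_ne_zero 3 hne)
        · exact h2
      apply hqd
      apply hinj
      rw [map_zero, ← eval_map_comp γ d q, hz]
    · refine ⟨w', hw'0, ?_⟩
      have hfin : MvPolynomial.eval w' q = Polynomial.eval t h := (heval t).symm
      rw [hfin, hev0]

private lemma adjoin_decomp {K L : Type*} [Field K] [Field L] [Algebra K L] [CharP K 2]
    (a : L) (b : K) (hab : a ^ 2 = algebraMap K L b) (y : L)
    (hy : y ∈ IntermediateField.adjoin K {a}) :
    ∃ c d : K, y = algebraMap K L c + algebraMap K L d * a := by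
  classical
  set γ := algebraMap K L with hγ
  have hinj : Function.Injective γ := γ.injective
  haveI : CharP L 2 := charP_of_injective_algebraMap hinj 2
  have h2L : (2 : L) = 0 := CharTwo.two_eq_zero
  let S : Subalgebra K L :=
  { carrier := {y | ∃ c d : K, y = γ c + γ d * a}
    add_mem' := by
      rintro x y ⟨c1, d1, rfl⟩ ⟨c2, d2, rfl⟩
      exact ⟨c1 + c2, d1 + d2, by simp only [map_add]; ring⟩
    mul_mem' := by
      rintro x y ⟨c1, d1, rfl⟩ ⟨c2, d2, rfl⟩
      refine ⟨c1 * c2 + d1 * d2 * b, c1 * d2 + d1 * c2, ?_⟩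
      simp only [map_add, map_mul]
      linear_combination (γ d1 * γ d2) * hab
    algebraMap_mem' := fun r => ⟨r, 0, by simp [hγ]⟩ }
  have hinv : ∀ x ∈ S, x⁻¹ ∈ S := by
    rintro x ⟨c, d, rfl⟩
    by_cases hx : γ c + γ d * a = 0
    · rw [hx]
      exact ⟨0, 0, by simp⟩
    · set e := c ^ 2 + d ^ 2 * b with he
      have hesq : (γ c + γ d * a) * (γ c + γ d * a) = γ e := by
        rw [he]
        simp only [map_add, map_mul, map_pow]
        linear_combination (γ d) ^ 2 * hab + (γ c * γ d * a) * h2L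
      have hee : γ e ≠ 0 := by
        rw [← hesq]
        exact mul_ne_zero hx hx
      have hxinv : (γ c + γ d * a)⁻¹ = (γ c + γ d * a) / γ e := by
        rw [← hesq]
        field_simp
      refine ⟨c / e, d / e, ?_⟩
      rw [map_div₀, map_div₀, hxinv]
      field_simp
  have hT : IntermediateField.adjoin K {a} ≤ S.toIntermediateField hinv :=
    IntermediateField.adjoin_le_iff.2 (by
      intro x hx
      rw [Set.mem_singleton_iff] at hx
      subst hx
      exact ⟨0, 1, by simp⟩)
  exact hT hy

open MvPolynomial in
private lemma pullback {K L : Type*} [Field K] [Field L] [Algebra K L] {n : ℕ}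
    (q : MvPolynomial (Fin n) K) (v : Fin n → L)
    (hall : ∀ i, v i ∈ Set.range (algebraMap K L)) (hv0 : v ≠ 0)
    (hv : eval v (q.map (algebraMap K L)) = 0) :
    ∃ w : Fin n → K, w ≠ 0 ∧ eval w q = 0 := by
  choose w hw using hall
  have hfun : (fun i => algebraMap K L (w i)) = v := funext hw
  refine ⟨w, fun h0 => hv0 ?_, ?_⟩
  · funext i
    rw [← hw i, congrFun h0 i]
    simp
  · apply (algebraMap K L).injective
    rw [map_zero, ← eval_map_comp (algebraMap K L) w q, hfun, hv]

universe u_ea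

open MvPolynomial in
private theorem even_aux (N : ℕ) : ∀ (K L : Type u_ea) [Field K] [Field L] [Algebra K L],
    ∀ [CharP K 2] [IsPurelyInseparable K L], ∀ {n : ℕ} (q : MvPolynomial (Fin n) K),
    q.IsHomogeneous 3 → ∀ (v : Fin n → L) (M : Fin n → ℕ),
    (∀ i, v i ^ 2 ^ M i ∈ Set.range (algebraMap K L)) → (∑ i, M i) ≤ N →
    v ≠ 0 → eval v (q.map (algebraMap K L)) = 0 →
    ∃ w : Fin n → K, w ≠ 0 ∧ eval w q = 0 := by
  induction N with
  | zero =>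
    intro K L _ _ _ _ _ n q hq v M hM hsum hv0 hv
    refine pullback q v (fun i => ?_) hv0 hv
    have hM0 : M i = 0 := by
      have := Finset.single_le_sum (f := M) (fun _ _ => Nat.zero_le _) (Finset.mem_univ i)
      omega
    have := hM i
    rwa [hM0, pow_zero, pow_one] at this
  | succ N ih =>
    intro K L _ _ _ _ _ n q hq v M hM hsum hv0 hv
    classical
    by_cases hall : ∀ i, v i ∈ Set.range (algebraMap K L)
    · exact pullback q v hall hv0 hv
    · push_neg at hall
      obtain ⟨i₀, hi₀⟩ := hall
      have hex : ∃ m, v i₀ ^ 2 ^ m ∈ Set.range (algebraMap K L) := ⟨M i₀, hM i₀⟩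
      set m₀ := Nat.find hex with hm₀def
      have hm₀ : v i₀ ^ 2 ^ m₀ ∈ Set.range (algebraMap K L) := Nat.find_spec hex
      have hm₀pos : m₀ ≠ 0 := by
        intro h0
        apply hi₀
        have h1 := hm₀
        rwa [h0, pow_zero, pow_one] at h1
      have hm₀le : m₀ ≤ M i₀ := Nat.find_min' hex (hM i₀)
      set a := v i₀ ^ 2 ^ (m₀ - 1) with hadef
      have hanotin : a ∉ Set.range (algebraMap K L) := by
        intro hin
        exact Nat.find_min hex (Nat.sub_lt (Nat.pos_of_ne_zero hm₀pos) one_pos) hin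
      have ha2 : a ^ 2 ∈ Set.range (algebraMap K L) := by
        rw [hadef, ← pow_mul, ← pow_succ, Nat.sub_add_cancel (Nat.one_le_iff_ne_zero.2 hm₀pos)]
        exact hm₀
      obtain ⟨b0, hb0⟩ := ha2
      set F := IntermediateField.adjoin K {a} with hF
      haveI : CharP ↥F 2 := charP_of_injective_algebraMap (algebraMap K ↥F).injective 2
      set aF : ↥F := ⟨a, IntermediateField.mem_adjoin_simple_self K a⟩ with haF
      have haFL : algebraMap ↥F L aF = a := rfl
      -- new exponent vector
      set M' : Fin n → ℕ := Function.update M i₀ (m₀ - 1) with hM'def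
      have hM' : ∀ i, v i ^ 2 ^ M' i ∈ Set.range (algebraMap ↥F L) := by
        intro i
        by_cases hii : i = i₀
        · subst hii
          rw [hM'def, Function.update_self]
          exact ⟨aF, haFL⟩
        · rw [hM'def, Function.update_of_ne hii]
          obtain ⟨y, hy⟩ := hM i
          exact ⟨algebraMap K ↥F y, by rw [← IsScalarTower.algebraMap_apply]; exact hy⟩
      have hsum' : (∑ i, M' i) ≤ N := by
        have h1 : ∑ i, M' i = (m₀ - 1) + ∑ i ∈ Finset.univ \ {i₀}, M i := by
          rw [hM'def]
          exact Finset.sum_update_of_mem (Finset.mem_univ i₀) M (m₀ - 1)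
        have h2 : M i₀ + ∑ i ∈ (Finset.univ : Finset (Fin n)).erase i₀, M i = ∑ i, M i :=
          Finset.add_sum_erase _ M (Finset.mem_univ i₀)
        rw [← Finset.erase_eq] at h1
        omega
      -- recursive call over F
      have hv' : eval v ((q.map (algebraMap K ↥F)).map (algebraMap ↥F L)) = 0 := by
        rw [MvPolynomial.map_map, ← IsScalarTower.algebraMap_eq]
        exact hv
      obtain ⟨w, hw0, hweval⟩ := ih ↥F L (q.map (algebraMap K ↥F))
        (isHomogeneous_map _ hq) v M' hM' hsum' hv0 hv'
      -- decompose each w i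
      have hdecomp : ∀ i, ∃ c d : K,
          w i = algebraMap K ↥F c + algebraMap K ↥F d * aF := by
        intro i
        obtain ⟨c, d, hcd⟩ := adjoin_decomp a b0 hb0.symm (w i : L) (w i).2
        refine ⟨c, d, ?_⟩
        apply (algebraMap ↥F L).injective
        rw [(algebraMap ↥F L).map_add, (algebraMap ↥F L).map_mul, haFL,
          ← IsScalarTower.algebraMap_apply, ← IsScalarTower.algebraMap_apply]
        exact hcd
      choose cc dd hcd using hdecomp
      have hwfun : (fun i => algebraMap K ↥F (cc i) + algebraMap K ↥F (dd i) * aF) = w :=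
        funext fun i => (hcd i).symm
      have haFnot : aF ∉ Set.range (algebraMap K ↥F) := by
        rintro ⟨k, hk⟩
        apply hanotin
        refine ⟨k, ?_⟩
        rw [IsScalarTower.algebraMap_apply K ↥F L, hk, haFL]
      have haF2 : aF ^ 2 = algebraMap K ↥F b0 := by
        apply (algebraMap ↥F L).injective
        rw [(algebraMap ↥F L).map_pow, haFL, ← IsScalarTower.algebraMap_apply]
        exact hb0.symm
      exact cubic_step hq aF haFnot b0 haF2 cc dd
        (by rw [hwfun]; exact hw0) (by rw [hwfun]; exact hweval)


open MvPolynomial in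
theorem stmt_10 (K L : Type*) [Field K] [Field L] [Algebra K L]
    (p : ℕ) (hp : p.Prime) [CharP K p] [IsPurelyInseparable K L]
    (d : ℕ) (hd : d = if p = 2 then 3 else 2)
    (n : ℕ) (q : MvPolynomial (Fin n) K) (hq : q.IsHomogeneous d)
    (hL : ∃ v : Fin n → L, v ≠ 0 ∧ eval v (q.map (algebraMap K L)) = 0) :
    ∃ w : Fin n → K, w ≠ 0 ∧ eval w q = 0 := by
  obtain ⟨v, hv0, hv⟩ := hL
  by_cases hp2 : p = 2
  · subst hp2
    rw [if_pos rfl] at hd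
    subst hd
    haveI : Fact (Nat.Prime 2) := ⟨hp⟩
    set F0 : IntermediateField K L := ⊥ with hF0
    haveI : CharP ↥F0 2 := charP_of_injective_algebraMap (algebraMap K ↥F0).injective 2
    choose M hM using fun i => IsPurelyInseparable.pow_mem ↥F0 2 (v i)
    obtain ⟨w0, hw00, hw0e⟩ := even_aux (∑ i, M i) ↥F0 L (q.map (algebraMap K ↥F0))
      (isHomogeneous_map _ hq) v M hM le_rfl hv0
      (by rw [MvPolynomial.map_map, ← IsScalarTower.algebraMap_eq]; exact hv)
    have hall : ∀ i, w0 i ∈ Set.range (algebraMap K ↥F0) := by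
      intro i
      have hmem : (w0 i : L) ∈ (⊥ : IntermediateField K L) := (w0 i).2
      rw [IntermediateField.mem_bot] at hmem
      obtain ⟨k, hk⟩ := hmem
      refine ⟨k, ?_⟩
      apply (algebraMap ↥F0 L).injective
      rw [← IsScalarTower.algebraMap_apply]
      exact hk
    exact pullback q w0 hall hw00 hw0e
  · rw [if_neg hp2] at hd
    subst hd
    exact odd_case hp hp2 hq v hv0 hv
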